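/- (Existence of a joint distribution with given univariate marginals and edge covariances on a tree; Section 2.2) Suppose the edge set E forms a tree on Fin n. Let μ_i be univariate pmfs on C i ⊆ ℝ with means m_i = Σ_{x ∈ C i} x * μ_i(x), and for each (i,j) ∈ E let Σ_{ij} ∈ ℝ. Suppose that for each (i,j) ∈ E there exists a bivariate pmf θ_{ij} on C i × C j with Σ_{y ∈ C j} θ_{ij}(x,y) = μ_i(x) for all x, Σ_{x ∈ C i} θ_{ij}(x,y) = μ_j(y) for all y, and Σ_{(x,y) ∈ C i × C j} x * y * θ_{ij}(x,y) − m_i * m_j = Σ_{ij}. Then there exists a joint distribution θ on Π i, C i with proj_i θ = μ_i for every i ∈ Fin n and with covariance Σ_c (c i) * (c j) * θ(c) − m_i * m_j = Σ_{ij} for every (i,j) ∈ E. -/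

import Mathlib

open Finset

noncomputable section

abbrev Pt {n : ℕ} (C : Fin n → Finset ℝ) := (i : Fin n) → {x : ℝ // x ∈ C i}

def IsJoint {n : ℕ} {C : Fin n → Finset ℝ} (θ : Pt C → ℝ) : Prop :=
  (∀ c, 0 ≤ θ c) ∧ ∑ c : Pt C, θ c = 1

def projUni {n : ℕ} {C : Fin n → Finset ℝ} (θ : Pt C → ℝ) (i : Fin n)
    (x : {x : ℝ // x ∈ C i}) : ℝ :=
  ∑ c : Pt C, if c i = x then θ c else 0

def projBi {n : ℕ} {C : Fin n → Finset ℝ} (θ : Pt C → ℝ) (i j : Fin n)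
    (p : {x : ℝ // x ∈ C i} × {y : ℝ // y ∈ C j}) : ℝ :=
  ∑ c : Pt C, if c i = p.1 ∧ c j = p.2 then θ c else 0

def IsPmf {S : Type*} [Fintype S] (p : S → ℝ) : Prop :=
  (∀ s, 0 ≤ p s) ∧ ∑ s, p s = 1

def KL {S : Type*} [Fintype S] (p q : S → ℝ) : ℝ :=
  ∑ s, if 0 < p s then p s * Real.log (p s / q s) else 0

def Vanishes {S : Type*} (p q : S → ℝ) : Prop := ∀ s, q s = 0 → p s = 0

def treeGraph {n : ℕ} (E : Finset (Fin n × Fin n)) : SimpleGraph (Fin n) :=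
  SimpleGraph.fromRel (fun i j => (i, j) ∈ E)

def IsTreeEdges {n : ℕ} (E : Finset (Fin n × Fin n)) : Prop :=
  (∀ e ∈ E, e.1 < e.2) ∧ (treeGraph E).IsTree

def psi {n : ℕ} {C : Fin n → Finset ℝ} {K : ℕ} (a : Fin K → Fin n → ℝ) (b : Fin K → ℝ)
    (c : Pt C) : ℝ :=
  ⨆ k : Fin K, (∑ i, a k i * (c i : ℝ) + b k)

def InTheta {n : ℕ} {C : Fin n → Finset ℝ} (E : Finset (Fin n × Fin n))
    (μU : (i : Fin n) → {x : ℝ // x ∈ C i} → ℝ)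
    (μB : (i j : Fin n) → ({x : ℝ // x ∈ C i} × {y : ℝ // y ∈ C j}) → ℝ)
    (ρ : ℝ) (θ : Pt C → ℝ) : Prop :=
  IsJoint θ ∧ (∀ i, projUni θ i = μU i) ∧
  ∀ i j, (i, j) ∈ E →
    Vanishes (projBi θ i j) (μB i j) ∧ KL (projBi θ i j) (μB i j) ≤ ρ

namespace Stmt13Aux

variable {n : ℕ} {C : Fin n → Finset ℝ}

lemma update_splitAt (j : Fin n) (r : (i : {i : Fin n // i ≠ j}) → {x : ℝ // x ∈ C i.1})
    (y y' : {x : ℝ // x ∈ C j}) :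
    Function.update ((Equiv.piSplitAt j fun i => {x : ℝ // x ∈ C i}).symm (y, r)) j y'
      = (Equiv.piSplitAt j fun i => {x : ℝ // x ∈ C i}).symm (y', r) := by
  funext k
  rcases eq_or_ne k j with rfl | h
  · simp [Equiv.piSplitAt]
  · simp [Function.update_of_ne h, Equiv.piSplitAt, h]

lemma master (j : Fin n) (w : {x : ℝ // x ∈ C j} → ℝ) (hw : ∑ y, w y = 1) (G : Pt C → ℝ) :
    ∑ c : Pt C, w (c j) * ∑ y, G (Function.update c j y) = ∑ c : Pt C, G c := by
  have key : ∀ H : Pt C → ℝ, ∑ c : Pt C, H c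
      = ∑ r : (i : {i : Fin n // i ≠ j}) → {x : ℝ // x ∈ C i.1},
          ∑ y : {x : ℝ // x ∈ C j},
          H ((Equiv.piSplitAt j fun i => {x : ℝ // x ∈ C i}).symm (y, r)) := by
    intro H
    rw [← Equiv.sum_comp (Equiv.piSplitAt j fun i => {x : ℝ // x ∈ C i}).symm H,
      Fintype.sum_prod_type, Finset.sum_comm]
  rw [key G, key fun c => w (c j) * ∑ y, G (Function.update c j y)]
  refine Finset.sum_congr rfl fun r _ => ?_
  have h1 : ∀ y : {x : ℝ // x ∈ C j},
      ((Equiv.piSplitAt j fun i => {x : ℝ // x ∈ C i}).symm (y, r)) j = y := by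
    intro y; simp [Equiv.piSplitAt]
  simp only [h1, update_splitAt]
  rw [← Finset.sum_mul, hw, one_mul]

lemma vanish {θ : Pt C → ℝ} (h0 : ∀ c, 0 ≤ θ c) {a : Fin n}
    {g : {x : ℝ // x ∈ C a} → ℝ} (hproj : projUni θ a = g)
    (c : Pt C) (hz : g (c a) = 0) : θ c = 0 := by
  have h : ∑ c' : Pt C, (if c' a = c a then θ c' else 0) = 0 := by
    have := congrFun hproj (c a)
    rw [hz] at this
    exact this
  have h2 := (Finset.sum_eq_zero_iff_of_nonneg ?_).mp h c (Finset.mem_univ c)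
  · simpa using h2
  · intro c' _
    by_cases hc : c' a = c a <;> simp [hc, h0 c']

lemma projUni_of_indep {θ : Pt C → ℝ} {μ : (i : Fin n) → {x : ℝ // x ∈ C i} → ℝ}
    (hμ : ∀ i, IsPmf (μ i)) (htot : ∑ c : Pt C, θ c = 1) (k : Fin n)
    (hind : ∀ c y, θ (Function.update c k y) * μ k (c k) = θ c * μ k y) :
    projUni θ k = μ k := by
  funext x
  have hm := master (C := C) k (μ k) (hμ k).2
    (fun c => if c k = x then θ c else 0)
  have : projUni θ k x
      = ∑ c : Pt C, μ k (c k) * ∑ y, (if (Function.update c k y) k = x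
          then θ (Function.update c k y) else 0) := hm.symm
  rw [this]
  have step : ∀ c : Pt C, μ k (c k) * ∑ y, (if (Function.update c k y) k = x
      then θ (Function.update c k y) else 0) = θ c * μ k x := by
    intro c
    simp only [Function.update_self]
    rw [Finset.sum_ite_eq' Finset.univ x (fun y => θ (Function.update c k y))]
    simp only [Finset.mem_univ, if_pos]
    rw [mul_comm, hind c x]
  rw [Finset.sum_congr rfl fun c _ => step c, ← Finset.sum_mul, htot, one_mul]

lemma sum_weight (θ : Pt C → ℝ) (a : Fin n) (W : {x : ℝ // x ∈ C a} → ℝ) :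
    ∑ c : Pt C, W (c a) * θ c = ∑ x, W x * projUni θ a x := by
  simp only [projUni, Finset.mul_sum]
  rw [Finset.sum_comm]
  refine Finset.sum_congr rfl fun c _ => ?_
  simp [mul_ite]

lemma extend {μ : (i : Fin n) → {x : ℝ // x ∈ C i} → ℝ} (hμ : ∀ i, IsPmf (μ i))
    {a b : Fin n} (hab : a ≠ b)
    {θ : Pt C → ℝ} (hθ : IsJoint θ) (hproj : ∀ i, projUni θ i = μ i)
    (hind : ∀ c y, θ (Function.update c b y) * μ b (c b) = θ c * μ b y)
    {κ : ({x : ℝ // x ∈ C a} × {y : ℝ // y ∈ C b}) → ℝ} (hκ0 : ∀ p, 0 ≤ κ p)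
    (hrow : ∀ x, ∑ y, κ (x, y) = μ a x) (hcol : ∀ y, ∑ x, κ (x, y) = μ b y) :
    ∃ θ' : Pt C → ℝ, IsJoint θ' ∧ (∀ i, projUni θ' i = μ i) ∧
      (∀ F : Pt C → ℝ, (∀ c y, F (Function.update c b y) = F c) →
        ∑ c : Pt C, F c * θ' c = ∑ c : Pt C, F c * θ c) ∧
      (∀ F : ({x : ℝ // x ∈ C a} × {y : ℝ // y ∈ C b}) → ℝ,
        ∑ c : Pt C, F (c a, c b) * θ' c = ∑ p, F p * κ p) ∧
      (∀ k, k ≠ a → k ≠ b →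
        (∀ c y, θ (Function.update c k y) * μ k (c k) = θ c * μ k y) →
        ∀ c (y : {x : ℝ // x ∈ C k}),
          θ' (Function.update c k y) * μ k (c k) = θ' c * μ k y) := by
  classical
  set h : Pt C → ℝ := fun c => ∑ y, θ (Function.update c b y) with hh
  set θ' : Pt C → ℝ := fun c => h c * (κ (c a, c b) / μ a (c a)) with hθ'def
  have f1 : ∀ c y, h (Function.update c b y) = h c := by
    intro c y
    simp only [hh]
    exact Finset.sum_congr rfl fun y' _ => by rw [Function.update_idem]
  have f2 : ∀ c, h c * μ b (c b) = θ c := by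
    intro c
    simp only [hh, Finset.sum_mul]
    calc ∑ y, θ (Function.update c b y) * μ b (c b) = ∑ y, θ c * μ b y :=
          Finset.sum_congr rfl fun y _ => hind c y
      _ = θ c := by rw [← Finset.mul_sum, (hμ b).2, mul_one]
  have f3 : ∀ c, 0 ≤ h c := fun c => Finset.sum_nonneg fun y _ => hθ.1 _
  have f4 : ∀ (x : {x : ℝ // x ∈ C a}) (y : {y : ℝ // y ∈ C b}),
      μ a x = 0 → κ (x, y) = 0 := by
    intro x y hz
    have h0 : ∑ y', κ (x, y') = 0 := by rw [hrow, hz]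
    exact (Finset.sum_eq_zero_iff_of_nonneg fun p _ => hκ0 _).mp h0 y (Finset.mem_univ y)
  have f5 : ∀ c, μ a (c a) = 0 → h c = 0 := by
    intro c hz
    refine Finset.sum_eq_zero fun y _ => ?_
    refine vanish hθ.1 (hproj a) _ ?_
    rwa [Function.update_of_ne hab]
  have fup : ∀ c (y : {y : ℝ // y ∈ C b}),
      θ' (Function.update c b y) = h c * (κ (c a, y) / μ a (c a)) := by
    intro c y
    simp only [hθ'def, f1, Function.update_of_ne hab, Function.update_self]
  have f6 : ∀ c, ∑ y, θ' (Function.update c b y) = h c := by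
    intro c
    simp only [fup]
    rw [← Finset.mul_sum, ← Finset.sum_div, hrow]
    rcases eq_or_ne (μ a (c a)) 0 with hz | hz
    · simp [f5 c hz]
    · rw [div_self hz, mul_one]
  have key1 : ∀ F : Pt C → ℝ, (∀ c y, F (Function.update c b y) = F c) →
      ∑ c : Pt C, F c * θ' c = ∑ c : Pt C, F c * θ c := by
    intro F hF
    have hm := master (C := C) b (μ b) (hμ b).2 (fun c => F c * θ' c)
    rw [← hm]
    refine Finset.sum_congr rfl fun c _ => ?_
    calc μ b (c b) * ∑ y, F (Function.update c b y) * θ' (Function.update c b y)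
        = μ b (c b) * ∑ y, F c * θ' (Function.update c b y) := by
          simp only [hF]
      _ = μ b (c b) * (F c * ∑ y, θ' (Function.update c b y)) := by
          conv_rhs => rw [Finset.mul_sum]
      _ = μ b (c b) * (F c * h c) := by rw [f6]
      _ = F c * θ c := by rw [← f2 c]; ring
  have key2 : ∀ F : ({x : ℝ // x ∈ C a} × {y : ℝ // y ∈ C b}) → ℝ,
      ∑ c : Pt C, F (c a, c b) * θ' c = ∑ p, F p * κ p := by
    intro F
    have hm := master (C := C) b (μ b) (hμ b).2 (fun c => F (c a, c b) * θ' c)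
    rw [← hm]
    have step : ∀ c : Pt C,
        μ b (c b) * ∑ y, F ((Function.update c b y) a, (Function.update c b y) b)
          * θ' (Function.update c b y)
        = (fun x => ∑ y, F (x, y) * κ (x, y) / μ a x) (c a) * θ c := by
      intro c
      simp only [Function.update_of_ne hab, Function.update_self, fup]
      have : ∑ y, F (c a, y) * (h c * (κ (c a, y) / μ a (c a)))
          = (∑ y, F (c a, y) * κ (c a, y) / μ a (c a)) * h c := by
        rw [Finset.sum_mul]
        exact Finset.sum_congr rfl fun y _ => by ring
      rw [this, ← f2 c]
      ring
    rw [Finset.sum_congr rfl fun c _ => step c, sum_weight θ a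
      (fun x => ∑ y, F (x, y) * κ (x, y) / μ a x), hproj a]
    have step2 : ∀ x : {x : ℝ // x ∈ C a},
        (∑ y, F (x, y) * κ (x, y) / μ a x) * μ a x = ∑ y, F (x, y) * κ (x, y) := by
      intro x
      rcases eq_or_ne (μ a x) 0 with hz | hz
      · simp [hz, f4 _ _ hz]
      · rw [← Finset.sum_div, div_mul_cancel₀ _ hz]
    rw [Finset.sum_congr rfl fun x _ => step2 x]
    exact (Fintype.sum_prod_type (f := fun p => F p * κ p)).symm
  have hθ'0 : ∀ c, 0 ≤ θ' c := fun c =>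
    mul_nonneg (f3 c) (div_nonneg (hκ0 _) ((hμ a).1 _))
  have htot' : ∑ c : Pt C, θ' c = 1 := by
    have := key1 (fun _ => 1) (fun _ _ => rfl)
    simpa [hθ.2] using this
  refine ⟨θ', ⟨hθ'0, htot'⟩, ?_, key1, key2, ?_⟩
  · intro i
    by_cases hib : i = b
    · rw [hib]
      funext x
      have h1 : projUni θ' b x = ∑ c : Pt C,
          (fun p : ({x : ℝ // x ∈ C a} × {y : ℝ // y ∈ C b}) =>
            if p.2 = x then (1:ℝ) else 0) (c a, c b) * θ' c := by
        simp only [projUni]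
        exact Finset.sum_congr rfl fun c _ => by by_cases hc : c b = x <;> simp [hc]
      rw [h1, key2 (fun p => if p.2 = x then (1:ℝ) else 0)]
      rw [Fintype.sum_prod_type]
      have hstep : ∀ x' : {x : ℝ // x ∈ C a},
          ∑ y, (if y = x then (1:ℝ) else 0) * κ (x', y) = κ (x', x) := by
        intro x'
        have e1 : ∑ y, (if y = x then (1:ℝ) else 0) * κ (x', y)
            = ∑ y, if y = x then κ (x', y) else 0 :=
          Finset.sum_congr rfl fun y _ => by by_cases hy : y = x <;> simp [hy]
        rw [e1, Finset.sum_ite_eq' Finset.univ x (fun y => κ (x', y))]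
        simp
      rw [Finset.sum_congr rfl fun x' _ => hstep x', hcol]
    · funext x
      have h1 : projUni θ' i x = ∑ c : Pt C,
          (if c i = x then (1:ℝ) else 0) * θ' c := by
        simp only [projUni]
        exact Finset.sum_congr rfl fun c _ => by by_cases hc : c i = x <;> simp [hc]
      have h2 : projUni θ i x = ∑ c : Pt C,
          (if c i = x then (1:ℝ) else 0) * θ c := by
        simp only [projUni]
        exact Finset.sum_congr rfl fun c _ => by by_cases hc : c i = x <;> simp [hc]
      rw [h1, key1 _ (fun c y => by rw [Function.update_of_ne hib]), ← h2, hproj i]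
  · intro k hka hkb hindk c y
    have hh' : h (Function.update c k y) * μ k (c k) = h c * μ k y := by
      simp only [hh, Finset.sum_mul]
      refine Finset.sum_congr rfl fun y' _ => ?_
      calc θ (Function.update (Function.update c k y) b y') * μ k (c k)
          = θ (Function.update (Function.update c b y') k y)
              * μ k ((Function.update c b y') k) := by
            rw [Function.update_comm hkb, Function.update_of_ne hkb]
        _ = θ (Function.update c b y') * μ k y := hindk _ y
    calc θ' (Function.update c k y) * μ k (c k)
        = (h (Function.update c k y) * μ k (c k)) * (κ (c a, c b) / μ a (c a)) := by
          simp only [hθ'def, Function.update_of_ne (Ne.symm hka),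
            Function.update_of_ne (Ne.symm hkb)]
          ring
      _ = (h c * μ k y) * (κ (c a, c b) / μ a (c a)) := by rw [hh']
      _ = θ' c * μ k y := by simp only [hθ'def]; ring

/-- The inductive invariant. -/
def Q {n : ℕ} {C : Fin n → Finset ℝ} (E : Finset (Fin n × Fin n))
    (μ : (i : Fin n) → {x : ℝ // x ∈ C i} → ℝ) (m : Fin n → ℝ) (Sig : Fin n → Fin n → ℝ)
    (S : Finset (Fin n)) : Prop :=
  ∃ θ : Pt C → ℝ, IsJoint θ ∧ (∀ i, projUni θ i = μ i) ∧
    (∀ i j, (i, j) ∈ E → i ∈ S → j ∈ S →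
      (∑ c : Pt C, (c i : ℝ) * (c j : ℝ) * θ c) - m i * m j = Sig i j) ∧
    (∀ k, k ∉ S → ∀ c (y : {x : ℝ // x ∈ C k}),
      θ (Function.update c k y) * μ k (c k) = θ c * μ k y)

end Stmt13Aux

/-- Existence of a joint distribution with given univariate marginals and prescribed
edge covariances on a tree: if each edge covariance `Σ_{ij}` is attainable by some
bivariate pmf consistent with the univariate marginals, then there is a joint
distribution with those univariate marginals attaining all the edge covariances. -/
theorem stmt13
    (n : ℕ) (hn : 1 ≤ n) (C : Fin n → Finset ℝ) (hC : ∀ i, (C i).Nonempty)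
    (E : Finset (Fin n × Fin n)) (hE : IsTreeEdges E)
    (μU : (i : Fin n) → {x : ℝ // x ∈ C i} → ℝ) (hμU : ∀ i, IsPmf (μU i))
    (m : Fin n → ℝ) (hm : ∀ i, m i = ∑ x : {x : ℝ // x ∈ C i}, (x : ℝ) * μU i x)
    (Sig : Fin n → Fin n → ℝ)
    (hcov : ∀ i j, (i, j) ∈ E →
      ∃ θij : ({x : ℝ // x ∈ C i} × {y : ℝ // y ∈ C j}) → ℝ,
        IsPmf θij ∧
        (∀ x : {x : ℝ // x ∈ C i},
          ∑ y : {y : ℝ // y ∈ C j}, θij (x, y) = μU i x) ∧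
        (∀ y : {y : ℝ // y ∈ C j},
          ∑ x : {x : ℝ // x ∈ C i}, θij (x, y) = μU j y) ∧
        (∑ p : {x : ℝ // x ∈ C i} × {y : ℝ // y ∈ C j},
          (p.1 : ℝ) * (p.2 : ℝ) * θij p) - m i * m j = Sig i j) :
    ∃ θ : Pt C → ℝ, IsJoint θ ∧ (∀ i, projUni θ i = μU i) ∧
      ∀ i j, (i, j) ∈ E →
        (∑ c : Pt C, (c i : ℝ) * (c j : ℝ) * θ c) - m i * m j = Sig i j := by
  classical
  obtain ⟨hlt, htree⟩ := hE
  have hconn := htree.isConnected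
  have hacyc := htree.IsAcyclic
  set i₀ : Fin n := ⟨0, hn⟩ with hi₀def
  have key : ∀ N : ℕ, ∃ S : Finset (Fin n), i₀ ∈ S ∧
      (∀ x ∈ S, ∃ p : (treeGraph E).Walk i₀ x, ∀ v ∈ p.support, v ∈ S) ∧
      min (N + 1) n ≤ S.card ∧ Stmt13Aux.Q E μU m Sig S := by
    intro N
    induction N with
    | zero =>
      refine ⟨{i₀}, Finset.mem_singleton_self i₀, ?_, ?_, ?_⟩
      · intro x hx
        rw [Finset.mem_singleton] at hx; subst hx
        exact ⟨SimpleGraph.Walk.nil, by simp⟩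
      · simp
      · -- base case Q
        have hind0 : ∀ (k : Fin n) (c : Pt C) (y : {x : ℝ // x ∈ C k}),
            (∏ i, μU i ((Function.update c k y) i)) * μU k (c k)
              = (∏ i, μU i (c i)) * μU k y := by
          intro k c y
          have hsplit : ∀ c' : Pt C, ∏ i, μU i (c' i)
              = μU k (c' k) * ∏ i ∈ Finset.univ.erase k, μU i (c' i) :=
            fun c' => (Finset.mul_prod_erase Finset.univ _ (Finset.mem_univ k)).symm
          rw [hsplit, hsplit c]
          have he : ∏ i ∈ Finset.univ.erase k, μU i ((Function.update c k y) i)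
              = ∏ i ∈ Finset.univ.erase k, μU i (c i) :=
            Finset.prod_congr rfl fun i hi => by
              rw [Function.update_of_ne (Finset.ne_of_mem_erase hi)]
          rw [Function.update_self, he]
          ring
        have htot : ∑ c : Pt C, ∏ i, μU i (c i) = 1 := by
          rw [← Fintype.prod_sum (f := fun i x => μU i x)]
          · exact Finset.prod_eq_one fun i _ => (hμU i).2
        refine ⟨fun c => ∏ i, μU i (c i),
          ⟨fun c => Finset.prod_nonneg fun i _ => (hμU i).1 _, htot⟩, ?_, ?_, ?_⟩
        · intro i
          exact Stmt13Aux.projUni_of_indep hμU htot i (hind0 i)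
        · intro i j hij hiS hjS
          rw [Finset.mem_singleton] at hiS hjS
          exact absurd (hlt _ hij) (by simp [hiS, hjS])
        · intro k _ c y
          exact hind0 k c y
    | succ N ih =>
      obtain ⟨S, hi₀S, hconnS, hcard, θ, hjoint, hproj, hcovS, hindS⟩ := ih
      by_cases hSu : S = Finset.univ
      · refine ⟨S, hi₀S, hconnS, ?_, θ, hjoint, hproj, hcovS, hindS⟩
        subst hSu
        simp only [Finset.card_univ, Fintype.card_fin]
        exact min_le_right _ _
      · obtain ⟨y0, hy0⟩ : ∃ y0, y0 ∉ S := by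
          by_contra hco; push_neg at hco
          exact hSu (Finset.eq_univ_iff_forall.mpr hco)
        obtain ⟨p⟩ := hconn.preconnected i₀ y0
        obtain ⟨d, _, hdf, hds⟩ := p.exists_boundary_dart (↑S : Set (Fin n))
          (by simpa using hi₀S) (by simpa using hy0)
        set a : Fin n := d.fst with hadef
        set b : Fin n := d.snd with hbdef
        have hadj : (treeGraph E).Adj a b := d.adj
        have haS : a ∈ S := by simpa using hdf
        have hbS : b ∉ S := by simpa using hds
        have hab : a ≠ b := hadj.ne
        -- uniqueness of the boundary edge into b
        have uniq : ∀ x ∈ S, (treeGraph E).Adj b x → x = a := by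
          intro x hxS hbx
          by_contra hxa
          obtain ⟨pa, hpa⟩ := hconnS a haS
          obtain ⟨px, hpx⟩ := hconnS x hxS
          set w : (treeGraph E).Walk a x := pa.reverse.append px with hwdef
          have hwS : ∀ v ∈ w.support, v ∈ S := by
            intro v hv
            rw [hwdef, SimpleGraph.Walk.mem_support_append_iff] at hv
            rcases hv with hv | hv
            · exact hpa v (by rwa [SimpleGraph.Walk.support_reverse,
                List.mem_reverse] at hv)
            · exact hpx v hv
          set p2 : (treeGraph E).Walk a x :=
            SimpleGraph.Walk.cons hadj (SimpleGraph.Walk.cons hbx SimpleGraph.Walk.nil)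
            with hp2def
          have hp2 : p2.IsPath := by
            rw [SimpleGraph.Walk.isPath_def, hp2def]
            simp only [SimpleGraph.Walk.support_cons, SimpleGraph.Walk.support_nil]
            refine List.nodup_cons.mpr ⟨?_, List.nodup_cons.mpr ⟨?_, List.nodup_singleton _⟩⟩
            · simp only [List.mem_cons, List.mem_singleton, List.not_mem_nil]
              push_neg
              exact ⟨hab, Ne.symm hxa, trivial⟩
            · simp only [List.mem_singleton, List.mem_cons, List.not_mem_nil]
              push_neg
              exact ⟨hbx.ne, trivial⟩
          have hpq := hacyc.path_unique ⟨p2, hp2⟩ w.toPath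
          have hbmem : b ∈ (w.toPath : (treeGraph E).Walk a x).support := by
            rw [← hpq]
            simp [hp2def]
          exact hbS (hwS _ (SimpleGraph.Walk.support_toPath_subset w hbmem))
        have hor : (a, b) ∈ E ∨ (b, a) ∈ E := by
          have := hadj
          rw [treeGraph, SimpleGraph.fromRel_adj] at this
          exact this.2
        -- construct κ
        obtain ⟨κ, hκ0, hrow, hcol, hedge⟩ :
            ∃ κ : ({x : ℝ // x ∈ C a} × {y : ℝ // y ∈ C b}) → ℝ,
              (∀ p, 0 ≤ κ p) ∧ (∀ x, ∑ y, κ (x, y) = μU a x) ∧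
              (∀ y, ∑ x, κ (x, y) = μU b y) ∧
              (∀ i j, (i, j) ∈ E → ((i = a ∧ j = b) ∨ (i = b ∧ j = a)) →
                (∑ p : {x : ℝ // x ∈ C a} × {y : ℝ // y ∈ C b},
                  (p.1 : ℝ) * (p.2 : ℝ) * κ p) - m i * m j = Sig i j) := by
          rcases hor with hmem | hmem
          · obtain ⟨θab, hpmf, hr, hc, hS⟩ := hcov a b hmem
            refine ⟨θab, hpmf.1, hr, hc, ?_⟩
            rintro i j hijE (⟨rfl, rfl⟩ | ⟨rfl, rfl⟩)
            · exact hS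
            · have h1 := hlt _ hijE
              have h2 := hlt _ hmem
              simp only at h1 h2
              exact absurd h2 (asymm h1)
          · obtain ⟨θba, hpmf, hr, hc, hS⟩ := hcov b a hmem
            refine ⟨fun p => θba (p.2, p.1), fun p => hpmf.1 _, ?_, ?_, ?_⟩
            · intro x; exact hc x
            · intro y; exact hr y
            · rintro i j hijE (⟨rfl, rfl⟩ | ⟨rfl, rfl⟩)
              · have h1 := hlt _ hijE
                have h2 := hlt _ hmem
                simp only at h1 h2
                exact absurd h2 (asymm h1)
              · have hswap : (∑ p : {x : ℝ // x ∈ C a} × {y : ℝ // y ∈ C b},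
                    (p.1 : ℝ) * (p.2 : ℝ) * θba (p.2, p.1))
                    = ∑ q : {x : ℝ // x ∈ C b} × {y : ℝ // y ∈ C a},
                      (q.1 : ℝ) * (q.2 : ℝ) * θba q := by
                  rw [← Equiv.sum_comp (Equiv.prodComm
                    {x : ℝ // x ∈ C b} {y : ℝ // y ∈ C a})
                    (fun p : {x : ℝ // x ∈ C a} × {y : ℝ // y ∈ C b} =>
                      (p.1 : ℝ) * (p.2 : ℝ) * θba (p.2, p.1))]
                  refine Finset.sum_congr rfl fun q _ => ?_
                  simp [Equiv.prodComm, mul_comm]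
                rw [hswap]
                exact hS
        obtain ⟨θ', hjoint', hproj', hF1, hF2, hindpres⟩ :=
          Stmt13Aux.extend hμU hab hjoint hproj (hindS b hbS) hκ0 hrow hcol
        refine ⟨insert b S, Finset.mem_insert_of_mem hi₀S, ?_, ?_, θ', hjoint', hproj', ?_, ?_⟩
        · -- connectivity
          intro x hx
          rcases Finset.mem_insert.mp hx with rfl | hxS
          · obtain ⟨pa, hpa⟩ := hconnS a haS
            refine ⟨pa.concat hadj, ?_⟩
            intro v hv
            rw [SimpleGraph.Walk.support_concat,
              List.mem_append] at hv
            rcases hv with hv | hv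
            · exact Finset.mem_insert_of_mem (hpa v hv)
            · rw [List.mem_singleton] at hv
              subst hv
              exact Finset.mem_insert_self _ _
          · obtain ⟨px, hpx⟩ := hconnS x hxS
            exact ⟨px, fun v hv => Finset.mem_insert_of_mem (hpx v hv)⟩
        · -- cardinality
          rw [Finset.card_insert_of_notMem hbS]
          have h1 : S.card < n := by
            have h2 := Finset.card_lt_card (Finset.ssubset_univ_iff.mpr hSu)
            simpa using h2
          simp only [min_def] at hcard ⊢
          split_ifs at hcard ⊢ <;> omega
        · -- covariances
          intro i j hijE hiS hjS
          rcases Finset.mem_insert.mp hiS with hib | hiS'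
          · -- i = b
            rcases Finset.mem_insert.mp hjS with hjb | hjS'
            · exact absurd (hlt _ hijE) (by simp [hib, hjb])
            · have hadjbj : (treeGraph E).Adj b j := by
                rw [treeGraph, SimpleGraph.fromRel_adj]
                refine ⟨?_, Or.inl (hib ▸ hijE)⟩
                have := hlt _ hijE
                rw [hib] at this
                exact Fin.ne_of_lt this
              have hja : j = a := uniq j hjS' hadjbj
              subst hib; subst hja
              have := hF2 (fun q => (q.2 : ℝ) * (q.1 : ℝ))
              rw [this]
              have hsw : (∑ q : {x : ℝ // x ∈ C a} × {y : ℝ // y ∈ C b},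
                  ((q.2 : ℝ) * (q.1 : ℝ)) * κ q)
                  = ∑ q : {x : ℝ // x ∈ C a} × {y : ℝ // y ∈ C b},
                    (q.1 : ℝ) * (q.2 : ℝ) * κ q :=
                Finset.sum_congr rfl fun q _ => by ring
              rw [hsw]
              exact hedge b a hijE (Or.inr ⟨rfl, rfl⟩)
          · rcases Finset.mem_insert.mp hjS with hjb | hjS'
            · -- j = b
              have hadjbi : (treeGraph E).Adj b i := by
                rw [treeGraph, SimpleGraph.fromRel_adj]
                refine ⟨?_, Or.inr (hjb ▸ hijE)⟩
                have := hlt _ hijE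
                rw [hjb] at this
                exact (Fin.ne_of_lt this).symm
              have hia : i = a := uniq i hiS' hadjbi
              subst hjb; subst hia
              have := hF2 (fun q => (q.1 : ℝ) * (q.2 : ℝ))
              rw [this]
              exact hedge a b hijE (Or.inl ⟨rfl, rfl⟩)
            · -- both old
              have hib : i ≠ b := fun h => hbS (h ▸ hiS')
              have hjb : j ≠ b := fun h => hbS (h ▸ hjS')
              have := hF1 (fun c => (c i : ℝ) * (c j : ℝ)) (fun c y => by
                simp only [Function.update_of_ne hib, Function.update_of_ne hjb])
              rw [this]
              exact hcovS i j hijE hiS' hjS'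
        · -- independence
          intro k hk c y
          have hkb : k ≠ b := fun h => hk (h ▸ Finset.mem_insert_self _ _)
          have hkS : k ∉ S := fun h => hk (Finset.mem_insert_of_mem h)
          have hka : k ≠ a := fun h => hkS (h ▸ haS)
          exact hindpres k hka hkb (hindS k hkS) c y
  obtain ⟨S, _, _, hcard, θ, hjoint, hproj, hcovS, _⟩ := key (n - 1)
  have hSuniv : S = Finset.univ := by
    apply Finset.eq_univ_of_card
    have h1 : S.card ≤ n := by
      have := Finset.card_le_univ S
      simpa using this
    have h2 : min (n - 1 + 1) n = n := by omega
    rw [h2] at hcard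
    simp only [Fintype.card_fin]
    omega
  exact ⟨θ, hjoint, hproj, fun i j hij =>
    hcovS i j hij (hSuniv ▸ Finset.mem_univ i) (hSuniv ▸ Finset.mem_univ j)⟩
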